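/- Under Assumptions 1-3 (see context), the numerical integration error of the quadrature rule satisfies $|\mathbb{E}[y(\xi)] - \mathbb{I}[y(\xi)]| \le L\epsilon + W\delta$, where $\mathbb{I}[y] = \sum_{k=1}^M y(\xi_k) w_k$. -/

import Mathlib

open MeasureTheory

lemma cs_aux {Ω : Type*} [MeasurableSpace Ω] (μ : Measure Ω) (f g : Ω → ℝ)
    (hf2 : Integrable (fun x => f x ^ 2) μ) (hg2 : Integrable (fun x => g x ^ 2) μ)
    (hfg : Integrable (fun x => f x * g x) μ) (hg : ∫ x, g x ^ 2 ∂μ = 1) :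
    |∫ x, f x * g x ∂μ| ≤ Real.sqrt (∫ x, f x ^ 2 ∂μ) := by
  set S := ∫ x, f x ^ 2 ∂μ with hS
  have hS0 : 0 ≤ S := integral_nonneg fun x => sq_nonneg _
  rcases eq_or_lt_of_le hS0 with h | h
  · have hz : (fun x => f x ^ 2) =ᵐ[μ] 0 := by
      rw [← integral_eq_zero_iff_of_nonneg (fun x => sq_nonneg (f x)) hf2]
      exact h.symm
    have hfg0 : (fun x => f x * g x) =ᵐ[μ] 0 := by
      filter_upwards [hz] with x hx
      have : f x = 0 := by
        have hx' : f x ^ 2 = 0 := hx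
        nlinarith [sq_nonneg (f x)]
      simp [this]
    rw [integral_congr_ae hfg0]
    simp [← h]
  · set t := Real.sqrt S with htdef
    have ht : 0 < t := Real.sqrt_pos.mpr h
    have ht2 : t ^ 2 = S := Real.sq_sqrt hS0
    have hpt : ∀ x, |f x * g x| ≤ (f x ^ 2 / t + t * g x ^ 2) / 2 := by
      intro x
      rw [le_div_iff₀ (by norm_num : (0:ℝ) < 2)]
      have h1 : f x ^ 2 / t + t * g x ^ 2 = (f x ^ 2 + t ^ 2 * g x ^ 2) / t := by
        field_simp
      rw [h1, le_div_iff₀ ht]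
      nlinarith [sq_nonneg (|f x| - t * |g x|), sq_abs (f x), sq_abs (g x),
        abs_mul (f x) (g x), abs_nonneg (f x), abs_nonneg (g x)]
    have hint : Integrable (fun x => (f x ^ 2 / t + t * g x ^ 2) / 2) μ :=
      ((hf2.div_const t).add (hg2.const_mul t)).div_const 2
    have step1 : |∫ x, f x * g x ∂μ| ≤ ∫ x, |f x * g x| ∂μ := by
      rw [← Real.norm_eq_abs]
      exact (norm_integral_le_integral_norm _).trans_eq (by simp [Real.norm_eq_abs, abs_mul])
    calc |∫ x, f x * g x ∂μ| ≤ ∫ x, |f x * g x| ∂μ := step1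
      _ ≤ ∫ x, (f x ^ 2 / t + t * g x ^ 2) / 2 ∂μ :=
        integral_mono hfg.abs hint hpt
      _ = ((∫ x, f x ^ 2 ∂μ) / t + t * ∫ x, g x ^ 2 ∂μ) / 2 := by
        rw [integral_div]
        congr 1
        rw [integral_add (hf2.div_const t) (hg2.const_mul t), integral_div,
          integral_const_mul]
      _ = t := by rw [hg, ← hS]; field_simp; nlinarith [ht2]

/-- Integration error bound: under Assumptions 1–3,
`|E[y] - I[y]| ≤ L ε + W δ`. -/
theorem stmt_4 {Ω : Type*} [MeasurableSpace Ω] (μ : Measure Ω) [IsProbabilityMeasure μ]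
    (n₁ n₂ : ℕ) (hn : n₁ ≤ n₂) (hn₁ : 0 < n₁)
    (Ψ : Fin n₂ → Ω → ℝ)
    (hΨ1 : Ψ ⟨0, lt_of_lt_of_le hn₁ hn⟩ = fun _ => 1)
    (horth : ∀ i j, ∫ x, Ψ i x * Ψ j x ∂μ = if i = j then (1 : ℝ) else 0)
    (hΨint : ∀ j, Integrable (Ψ j) μ)
    (hΨ2 : ∀ i j, Integrable (fun x => Ψ i x * Ψ j x) μ)
    (y : Ω → ℝ) (L δ ε W : ℝ)
    (hymeas : AEStronglyMeasurable y μ)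
    (hy2 : Integrable (fun x => (y x) ^ 2) μ)
    (hyΨ : ∀ j, Integrable (fun x => y x * Ψ j x) μ)
    (hL : Real.sqrt (∫ x, (y x) ^ 2 ∂μ) ≤ L)
    (c : Fin n₂ → ℝ) (hc : ∀ j, c j = ∫ x, y x * Ψ j x ∂μ)
    (yp : Ω → ℝ)
    (hyp : yp = fun x => ∑ j : Fin n₁, c (Fin.castLE hn j) * Ψ (Fin.castLE hn j) x)
    (hδ : Real.sqrt (∫ x, (y x - yp x) ^ 2 ∂μ) ≤ δ)
    (hdiff2 : Integrable (fun x => (y x - yp x) ^ 2) μ)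
    (M : ℕ) (ξ : Fin M → Ω) (w : Fin M → ℝ)
    (hW : ∀ f : Ω → ℝ, Integrable f μ →
      |∑ k, w k * f (ξ k)| ≤ W * ∫ x, |f x| ∂μ)
    (hε : ∑ j : Fin n₂, |(∑ k, w k * Ψ j (ξ k)) - ∫ x, Ψ j x ∂μ| ≤ ε) :
    |(∫ x, y x ∂μ) - ∑ k, w k * y (ξ k)| ≤ L * ε + W * δ := by
  classical
  set i0 : Fin n₂ := ⟨0, lt_of_lt_of_le hn₁ hn⟩ with hi0
  -- basic positivity facts
  have hL0 : 0 ≤ L := le_trans (Real.sqrt_nonneg _) hL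
  have hW0 : 0 ≤ W := by
    have h := hW (fun _ => 1) (integrable_const 1)
    simp at h
    exact le_trans (abs_nonneg _) h
  -- integrability
  have hy_int : Integrable y μ := by
    refine Integrable.mono' ((hy2.add (integrable_const 1)).div_const 2) hymeas ?_
    filter_upwards with x
    simp only [Pi.add_apply, Real.norm_eq_abs]
    nlinarith [sq_nonneg (|y x| - 1), sq_abs (y x), abs_nonneg (y x)]
  have hyp_int : Integrable yp μ := by
    rw [hyp]
    exact integrable_finset_sum _ fun j _ => (hΨint _).const_mul _
  have hd_int : Integrable (fun x => y x - yp x) μ := hy_int.sub hyp_int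
  -- mean of basis functions
  have hEψ : ∀ j, ∫ x, Ψ j x ∂μ = if j = i0 then (1:ℝ) else 0 := by
    intro j
    have h := horth j i0
    rw [hΨ1] at h
    simpa using h
  -- mean of y
  have hEy : ∫ x, y x ∂μ = c i0 := by
    rw [hc i0, hΨ1]
    simp
  -- |c j| ≤ L
  have hcL : ∀ j, |c j| ≤ L := by
    intro j
    rw [hc j]
    refine le_trans (cs_aux μ y (Ψ j) hy2 ?_ (hyΨ j) ?_) hL
    · simpa [sq] using hΨ2 j j
    · simpa [sq] using horth j j
  -- quadrature of yp
  have hIyp : ∑ k, w k * yp (ξ k)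
      = ∑ j : Fin n₁, c (Fin.castLE hn j) * ∑ k, w k * Ψ (Fin.castLE hn j) (ξ k) := by
    simp only [hyp, Finset.mul_sum]
    rw [Finset.sum_comm]
    exact Finset.sum_congr rfl fun j _ => Finset.sum_congr rfl fun k _ => by ring
  -- mean of yp
  have hcast0 : Fin.castLE hn (⟨0, hn₁⟩ : Fin n₁) = i0 := rfl
  have hEyp : ∑ j : Fin n₁, c (Fin.castLE hn j) * ∫ x, Ψ (Fin.castLE hn j) x ∂μ = c i0 := by
    have key : ∀ j : Fin n₁, c (Fin.castLE hn j) * ∫ x, Ψ (Fin.castLE hn j) x ∂μ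
        = if j = (⟨0, hn₁⟩ : Fin n₁) then c i0 else 0 := by
      intro j
      rw [hEψ]
      by_cases hj : j = (⟨0, hn₁⟩ : Fin n₁)
      · subst hj
        simp [hcast0]
      · have hne : Fin.castLE hn j ≠ i0 := by
          intro h
          exact hj (Fin.castLE_injective hn (h.trans hcast0.symm))
        simp [hne, hj]
    rw [Finset.sum_congr rfl fun j _ => key j]
    simp
  -- Part A : main term
  have hA : |c i0 - ∑ k, w k * yp (ξ k)| ≤ L * ε := by
    rw [hIyp, ← hEyp, ← Finset.sum_sub_distrib]
    simp only [← mul_sub]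
    refine (Finset.abs_sum_le_sum_abs _ _).trans ?_
    have step : ∀ j : Fin n₁,
        |c (Fin.castLE hn j) * ((∫ x, Ψ (Fin.castLE hn j) x ∂μ)
          - ∑ k, w k * Ψ (Fin.castLE hn j) (ξ k))|
        ≤ L * |(∑ k, w k * Ψ (Fin.castLE hn j) (ξ k)) - ∫ x, Ψ (Fin.castLE hn j) x ∂μ| := by
      intro j
      rw [abs_mul, abs_sub_comm]
      exact mul_le_mul_of_nonneg_right (hcL _) (abs_nonneg _)
    refine (Finset.sum_le_sum fun j _ => step j).trans ?_
    rw [← Finset.mul_sum]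
    refine mul_le_mul_of_nonneg_left ?_ hL0
    refine le_trans ?_ hε
    set F : Fin n₂ → ℝ := fun j => |(∑ k, w k * Ψ j (ξ k)) - ∫ x, Ψ j x ∂μ| with hF
    calc ∑ j : Fin n₁, F (Fin.castLE hn j)
        = ∑ j ∈ (Finset.univ : Finset (Fin n₁)).image (Fin.castLE hn), F j :=
          (Finset.sum_image fun a _ b _ h => Fin.castLE_injective hn h).symm
      _ ≤ ∑ j : Fin n₂, F j :=
          Finset.sum_le_sum_of_subset_of_nonneg (Finset.subset_univ _)
            (fun i _ _ => abs_nonneg _)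
  -- Part B : projection error term
  have hB : |(∑ k, w k * yp (ξ k)) - ∑ k, w k * y (ξ k)| ≤ W * δ := by
    have hsum : ∑ k, w k * (y (ξ k) - yp (ξ k))
        = (∑ k, w k * y (ξ k)) - ∑ k, w k * yp (ξ k) := by
      rw [← Finset.sum_sub_distrib]
      exact Finset.sum_congr rfl fun k _ => by ring
    have h2 := hW (fun x => y x - yp x) hd_int
    rw [hsum] at h2
    have h3 : ∫ x, |y x - yp x| ∂μ ≤ δ := by
      have h4 := cs_aux μ (fun x => |y x - yp x|) (fun _ => (1:ℝ))
        (by simpa [sq_abs] using hdiff2)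
        (by simp)
        (by simpa using hd_int.abs)
        (by simp)
      have h5 : |∫ x, |y x - yp x| * 1 ∂μ| = ∫ x, |y x - yp x| ∂μ := by
        simp only [mul_one]
        exact abs_of_nonneg (integral_nonneg fun x => abs_nonneg _)
      have h6 : (∫ x, |y x - yp x| ^ 2 ∂μ) = ∫ x, (y x - yp x) ^ 2 ∂μ := by
        refine integral_congr_ae ?_
        filter_upwards with x
        rw [sq_abs]
      rw [h5, h6] at h4
      exact h4.trans hδ
    rw [abs_sub_comm]
    exact h2.trans (mul_le_mul_of_nonneg_left h3 hW0)
  calc |(∫ x, y x ∂μ) - ∑ k, w k * y (ξ k)|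
      = |(c i0 - ∑ k, w k * yp (ξ k)) + ((∑ k, w k * yp (ξ k)) - ∑ k, w k * y (ξ k))| := by
        rw [hEy]; ring_nf
    _ ≤ |c i0 - ∑ k, w k * yp (ξ k)| + |(∑ k, w k * yp (ξ k)) - ∑ k, w k * y (ξ k)| :=
        abs_add_le _ _
    _ ≤ L * ε + W * δ := add_le_add hA hB
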